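/- (Dominance Rule) Let K = (k_0, k_1, …, k_N) and K' = (k'_0, k'_1, …, k'_N) be switching policies such that, for some J ∈ {0, 1, …, N−1}, one has k_0 = k'_0 = 0, k_1 = k'_1 = 1, …, k_{J−1} = k'_{J−1} = J−1, and k_J ≠ k'_J. If W_q(K') < W_q(K), then there exists an index i ∈ {J, J+1, …, N−1} for which k'_i < k_i. -/

import Mathlib

open Finset

/-- A switching policy: `k 0 ≥ 0`, `k i - k (i-1) ≥ 1` for `1 ≤ i ≤ N`, and `k N = S`. -/
def IsPolicy (N : ℕ) (S : ℤ) (k : ℕ → ℤ) : Prop :=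
  0 ≤ k 0 ∧ (∀ i : ℕ, 1 ≤ i → i ≤ N → 1 ≤ k i - k (i - 1)) ∧ k N = S

/-- `X_i = ∏_{g=1}^{i-1} (1/g)^(k_g - k_{g-1})`. -/
noncomputable def Xcoef (k : ℕ → ℤ) (i : ℕ) : ℝ :=
  ∏ g ∈ Finset.Icc 1 (i - 1), ((1 : ℝ) / (g : ℝ)) ^ (k g - k (g - 1))

/-- `β (k 0) = 1` and, for `1 ≤ i ≤ N` and `k (i-1) + 1 ≤ j ≤ k i`,
`β j = (λ/μ)^(j - k 0) * (1/i)^(j - k (i-1)) * X_i`. -/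
def IsBeta (lam mu : ℝ) (N : ℕ) (k : ℕ → ℤ) (β : ℤ → ℝ) : Prop :=
  β (k 0) = 1 ∧
  ∀ i : ℕ, 1 ≤ i → i ≤ N → ∀ j : ℤ, k (i - 1) + 1 ≤ j → j ≤ k i →
    β j = (lam / mu) ^ (j - k 0) * ((1 : ℝ) / (i : ℝ)) ^ (j - k (i - 1)) * Xcoef k i

/-- Steady-state probabilities `P j = β j / Σ_{m=k 0}^{S} β m`. -/
noncomputable def Pfun (S : ℤ) (k : ℕ → ℤ) (β : ℤ → ℝ) (j : ℤ) : ℝ :=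
  β j / ∑ m ∈ Finset.Icc (k 0) S, β m

/-- Expected number of front-room workers. -/
noncomputable def Fval (N : ℕ) (S : ℤ) (k : ℕ → ℤ) (β : ℤ → ℝ) : ℝ :=
  ∑ i ∈ Finset.Icc 1 N, ∑ j ∈ Finset.Icc (k (i - 1) + 1) (k i), (i : ℝ) * Pfun S k β j

/-- Expected number of back-room workers. -/
noncomputable def Bval (N : ℕ) (S : ℤ) (k : ℕ → ℤ) (β : ℤ → ℝ) : ℝ :=
  (N : ℝ) - Fval N S k β

/-- Expected number of customers in the front room. -/
noncomputable def Lval (S : ℤ) (k : ℕ → ℤ) (β : ℤ → ℝ) : ℝ :=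
  ∑ j ∈ Finset.Icc (k 0) S, (j : ℝ) * Pfun S k β j

/-- Expected waiting time `W_q = L / (λ (1 - P S)) - 1/μ`. -/
noncomputable def Wq (lam mu : ℝ) (S : ℤ) (k : ℕ → ℤ) (β : ℤ → ℝ) : ℝ :=
  Lval S k β / (lam * (1 - Pfun S k β S)) - 1 / mu

-- auxiliary lemmas
lemma policy_mono {N : ℕ} {S : ℤ} {k : ℕ → ℤ} (hk : IsPolicy N S k) :
    ∀ a b : ℕ, a ≤ b → b ≤ N → k a ≤ k b := by
  intro a b hab hbN
  induction b with
  | zero => interval_cases a; rfl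
  | succ n ih =>
    rcases Nat.lt_or_ge a (n+1) with h | h
    · have h1 : k a ≤ k n := ih (by omega) (by omega)
      have h2 := hk.2.1 (n+1) (by omega) hbN
      simp only [Nat.add_sub_cancel] at h2
      omega
    · have : a = n + 1 := by omega
      subst this; rfl

lemma policy_strict {N : ℕ} {S : ℤ} {k : ℕ → ℤ} (hk : IsPolicy N S k) :
    ∀ a b : ℕ, a < b → b ≤ N → k a < k b := by
  intro a b hab hbN
  have h1 : k a ≤ k (b-1) := policy_mono hk a (b-1) (by omega) (by omega)
  have h2 := hk.2.1 b (by omega) hbN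
  omega

lemma stage {N : ℕ} {S : ℤ} {k : ℕ → ℤ} (hk : IsPolicy N S k) {m : ℤ}
    (h1 : k 0 < m) (h2 : m ≤ S) :
    ∃ i : ℕ, 1 ≤ i ∧ i ≤ N ∧ k (i - 1) < m ∧ m ≤ k i := by
  classical
  have hex : ∃ i, m ≤ k i := ⟨N, by rw [hk.2.2]; exact h2⟩
  set i := Nat.find hex with hidef
  have hPi : m ≤ k i := Nat.find_spec hex
  have hiN : i ≤ N := Nat.find_min' hex (by rw [hk.2.2]; exact h2)
  have hi1 : 1 ≤ i := by
    by_contra h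
    have : i = 0 := by omega
    rw [this] at hPi; omega
  have hlt : k (i - 1) < m := by
    have := Nat.find_min hex (show i - 1 < i by omega)
    omega
  exact ⟨i, hi1, hiN, hlt, hPi⟩

lemma beta_step {lam mu : ℝ} (hlam : 0 < lam) (hmu : 0 < mu)
    {N : ℕ} {S : ℤ} {k : ℕ → ℤ} (hk : IsPolicy N S k)
    {β : ℤ → ℝ} (hβ : IsBeta lam mu N k β) {j : ℤ}
    (h1 : k 0 ≤ j) (h2 : j < S) :
    ∃ i : ℕ, 1 ≤ i ∧ i ≤ N ∧ k (i - 1) < j + 1 ∧ j + 1 ≤ k i ∧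
      β (j + 1) = β j * (lam / mu) * ((1:ℝ) / (i : ℝ)) := by
  obtain ⟨i, hi1, hiN, hlo, hhi⟩ := stage hk (show k 0 < j + 1 by omega) (by omega)
  refine ⟨i, hi1, hiN, hlo, hhi, ?_⟩
  have hrne : (lam / mu) ≠ 0 := by positivity
  have hβj1 : β (j+1) = (lam / mu) ^ (j + 1 - k 0) * ((1:ℝ)/(i:ℝ)) ^ (j + 1 - k (i-1)) * Xcoef k i :=
    hβ.2 i hi1 hiN (j+1) (by omega) hhi
  obtain ⟨i1, rfl⟩ : ∃ i1, i = i1 + 1 := ⟨i - 1, by omega⟩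
  simp only [Nat.add_sub_cancel] at hβj1 hlo ⊢
  rcases lt_or_ge (k i1) j with hcase | hcase
  · -- j also in stage i1+1
    have hβj : β j = (lam / mu) ^ (j - k 0) * ((1:ℝ)/((i1+1:ℕ):ℝ)) ^ (j - k i1) * Xcoef k (i1+1) := by
      have := hβ.2 (i1+1) hi1 hiN j (by simp only [Nat.add_sub_cancel]; omega) (by omega)
      simpa using this
    have hine : ((1:ℝ)/((i1+1:ℕ):ℝ)) ≠ 0 := by
      have : ((i1+1:ℕ):ℝ) > 0 := by positivity
      positivity
    rw [hβj1, hβj, show j + 1 - k 0 = (j - k 0) + 1 by ring,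
      show j + 1 - k i1 = (j - k i1) + 1 by ring,
      zpow_add_one₀ hrne, zpow_add_one₀ hine]
    ring
  · -- j = k i1
    have hje : j = k i1 := by omega
    rcases Nat.eq_zero_or_pos i1 with h0 | hpos
    · -- i = 1, j = k 0
      subst h0
      have hβj : β j = 1 := by rw [hje]; exact hβ.1
      have hX : Xcoef k 1 = 1 := by simp [Xcoef]
      rw [hβj1, hX, hβj, hje]
      norm_num
    · -- i1 ≥ 1
      obtain ⟨i2, rfl⟩ : ∃ i2, i1 = i2 + 1 := ⟨i1 - 1, by omega⟩
      have hi1N : i2 + 1 ≤ N := by omega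
      have hβj : β j = (lam / mu) ^ (j - k 0) * ((1:ℝ)/((i2+1:ℕ):ℝ)) ^ (j - k i2) * Xcoef k (i2+1) := by
        have hst := hk.2.1 (i2+1) (by omega) hi1N
        simp only [Nat.add_sub_cancel] at hst
        have := hβ.2 (i2+1) (by omega) hi1N j (by simp only [Nat.add_sub_cancel]; omega) (by omega)
        simpa using this
      have hX : Xcoef k (i2+1+1) = Xcoef k (i2+1) * ((1:ℝ)/((i2+1:ℕ):ℝ)) ^ (k (i2+1) - k i2) := by
        unfold Xcoef
        simp only [Nat.add_sub_cancel]
        rw [Finset.prod_Icc_succ_top (by omega : 1 ≤ i2 + 1)]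
        simp only [Nat.add_sub_cancel]
      rw [hβj1, hX, hβj, hje, show k (i2+1) + 1 - k (i2+1) = 1 by ring, zpow_one,
        show k (i2+1) + 1 - k 0 = (k (i2+1) - k 0) + 1 by ring, zpow_add_one₀ hrne]
      ring

lemma beta_pos {lam mu : ℝ} (hlam : 0 < lam) (hmu : 0 < mu)
    {N : ℕ} {S : ℤ} {k : ℕ → ℤ} (hk : IsPolicy N S k)
    {β : ℤ → ℝ} (hβ : IsBeta lam mu N k β) :
    ∀ j : ℤ, k 0 ≤ j → j ≤ S → 0 < β j := by
  have main : ∀ j : ℤ, k 0 ≤ j → (j ≤ S → 0 < β j) := by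
    intro j hj
    refine Int.le_induction (motive := fun j _ => j ≤ S → 0 < β j) ?_ ?_ j hj
    · intro _; rw [hβ.1]; norm_num
    · intro n hn ih hnS
      obtain ⟨i, hi1, _, _, _, hstep⟩ := beta_step hlam hmu hk hβ hn (by omega)
      have h1 : (0:ℝ) < β n := ih (by omega)
      have h2 : (0:ℝ) < (i:ℝ) := by exact_mod_cast hi1
      rw [hstep]
      positivity
  exact fun j h1 h2 => main j h1 h2

lemma cross_ineq {lam mu : ℝ} (hlam : 0 < lam) (hmu : 0 < mu)
    {N : ℕ} {S : ℤ} {k k' : ℕ → ℤ} (hk : IsPolicy N S k) (hk' : IsPolicy N S k')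
    {β β' : ℤ → ℝ} (hβ : IsBeta lam mu N k β) (hβ' : IsBeta lam mu N k' β')
    (hle : ∀ t : ℕ, t ≤ N → k t ≤ k' t) :
    ∀ n : ℕ, ∀ m : ℤ, k' 0 ≤ m → m + n ≤ S → β (m + n) * β' m ≤ β m * β' (m + n) := by
  intro n
  induction n with
  | zero => intro m _ _; norm_num
  | succ n ih =>
    intro m hm hmS
    have hk0 : k 0 ≤ k' 0 := hle 0 (by omega)
    set j : ℤ := m + n with hjdef
    have hcast : m + ((n:ℕ)+1:ℕ) = j + 1 := by push_cast [hjdef]; ring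
    have hjS : j + 1 ≤ S := by rw [← hcast]; exact_mod_cast hmS
    have hmj : m ≤ j := by omega
    obtain ⟨i, hi1, hiN, hlo, hhi, hstep⟩ :=
      beta_step hlam hmu hk hβ (show k 0 ≤ j by omega) (by omega)
    obtain ⟨i', hi'1, hi'N, hlo', hhi', hstep'⟩ :=
      beta_step hlam hmu hk' hβ' (show k' 0 ≤ j by omega) (by omega)
    have hii : i' ≤ i := by
      by_contra h
      have h1 : k' i ≤ k' (i' - 1) := policy_mono hk' i (i'-1) (by omega) (by omega)
      have h2 : k i ≤ k' i := hle i hiN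
      omega
    have hIH : β j * β' m ≤ β m * β' j := ih m hm (by omega)
    have hβm : 0 < β m := beta_pos hlam hmu hk hβ m (by omega) (by omega)
    have hβ'j : 0 < β' j := beta_pos hlam hmu hk' hβ' j (hm.trans hmj) (by omega)
    have hipos : (0:ℝ) < (i:ℝ) := by exact_mod_cast hi1
    have hi'pos : (0:ℝ) < (i':ℝ) := by exact_mod_cast hi'1
    have hfrac : (1:ℝ)/(i:ℝ) ≤ (1:ℝ)/(i':ℝ) := by
      apply one_div_le_one_div_of_le hi'pos
      exact_mod_cast hii
    have hr : (0:ℝ) < lam / mu := by positivity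
    rw [hcast, hstep, hstep']
    calc β j * (lam/mu) * ((1:ℝ)/(i:ℝ)) * β' m
        = (β j * β' m) * ((lam/mu) * ((1:ℝ)/(i:ℝ))) := by ring
      _ ≤ (β m * β' j) * ((lam/mu) * ((1:ℝ)/(i:ℝ))) := by
          apply mul_le_mul_of_nonneg_right hIH; positivity
      _ ≤ (β m * β' j) * ((lam/mu) * ((1:ℝ)/(i':ℝ))) := by
          apply mul_le_mul_of_nonneg_left _ (by positivity)
          exact mul_le_mul_of_nonneg_left hfrac hr.le
      _ = β m * (β' j * (lam/mu) * ((1:ℝ)/(i':ℝ))) := by ring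

lemma Wq_eq {lam mu : ℝ} (hlam : 0 < lam) (hmu : 0 < mu)
    {N : ℕ} {S : ℤ} {k : ℕ → ℤ} (hN : 1 ≤ N) (hk : IsPolicy N S k)
    {β : ℤ → ℝ} (hβ : IsBeta lam mu N k β) :
    (Lval S k β) / (lam * (1 - Pfun S k β S)) - 1 / mu
      = (∑ j ∈ Finset.Icc (k 0) S, (j:ℝ) * β j)
          / (lam * ∑ m ∈ Finset.Icc (k 0) (S-1), β m) - 1 / mu := by
  have hk0S : k 0 < S := by
    have := policy_strict hk 0 N (by omega) le_rfl
    rw [hk.2.2] at this; exact this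
  set A : ℝ := ∑ m ∈ Finset.Icc (k 0) S, β m with hAdef
  set A1 : ℝ := ∑ m ∈ Finset.Icc (k 0) (S-1), β m with hA1def
  set Ln : ℝ := ∑ j ∈ Finset.Icc (k 0) S, (j:ℝ) * β j with hLndef
  have hApos : 0 < A := by
    apply Finset.sum_pos
    · intro j hj
      rw [Finset.mem_Icc] at hj
      exact beta_pos hlam hmu hk hβ j hj.1 hj.2
    · exact ⟨k 0, by rw [Finset.mem_Icc]; omega⟩
  have hA1pos : 0 < A1 := by
    apply Finset.sum_pos
    · intro j hj
      rw [Finset.mem_Icc] at hj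
      exact beta_pos hlam hmu hk hβ j hj.1 (by omega)
    · exact ⟨k 0, by rw [Finset.mem_Icc]; omega⟩
  have hdiff : Finset.Icc (k 0) S \ {S} = Finset.Icc (k 0) (S-1) := by
    ext x
    simp only [Finset.mem_sdiff, Finset.mem_Icc, Finset.mem_singleton]
    omega
  have hsplit : A = A1 + β S := by
    rw [hAdef, Finset.sum_eq_sum_sdiff_singleton_add
      (show S ∈ Finset.Icc (k 0) S by rw [Finset.mem_Icc]; omega) β, hdiff]
  have hL : Lval S k β = Ln / A := by
    unfold Lval Pfun
    rw [← hAdef, Finset.sum_div]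
    exact Finset.sum_congr rfl (fun j _ => by rw [mul_div_assoc])
  have hP : Pfun S k β S = β S / A := rfl
  have h1 : (1 : ℝ) - β S / A = A1 / A := by
    rw [eq_div_iff hApos.ne', sub_mul, div_mul_cancel₀ _ hApos.ne', one_mul]
    linarith
  rw [hL, hP, h1]
  have h3 : (Ln / A) / (lam * (A1 / A)) = Ln / (lam * A1) := by
    rw [div_eq_div_iff (by positivity) (by positivity)]
    field_simp
  rw [h3]

theorem dominance_rule'
    (lam mu : ℝ) (hlam : 0 < lam) (hmu : 0 < mu)
    (N : ℕ) (hN : 1 ≤ N) (S : ℤ) (hS : (N : ℤ) ≤ S)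
    (k k' : ℕ → ℤ) (hk : IsPolicy N S k) (hk' : IsPolicy N S k')
    (J : ℕ) (hJ : J < N)
    (hpre : ∀ m : ℕ, m < J → k m = (m : ℤ) ∧ k' m = (m : ℤ))
    (hne : k J ≠ k' J)
    (β β' : ℤ → ℝ)
    (hβ : IsBeta lam mu N k β) (hβ' : IsBeta lam mu N k' β')
    (hWq : (Lval S k' β') / (lam * (1 - Pfun S k' β' S)) - 1 / mu
         < (Lval S k β) / (lam * (1 - Pfun S k β S)) - 1 / mu) :
    ∃ i : ℕ, J ≤ i ∧ i < N ∧ k' i < k i := by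
  classical
  by_contra hcon
  push_neg at hcon
  have hle : ∀ t : ℕ, t ≤ N → k t ≤ k' t := by
    intro t htN
    rcases lt_or_ge t J with h | h
    · obtain ⟨h1, h2⟩ := hpre t h; omega
    · rcases lt_or_ge t N with h2 | h2
      · exact hcon t h h2
      · have ht : t = N := by omega
        rw [ht, hk.2.2, hk'.2.2]
  have hk0le : k 0 ≤ k' 0 := hle 0 (by omega)
  have hk0S : k 0 < S := by
    have := policy_strict hk 0 N (by omega) le_rfl
    rw [hk.2.2] at this; exact this
  have hk'0S : k' 0 < S := by
    have := policy_strict hk' 0 N (by omega) le_rfl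
    rw [hk'.2.2] at this; exact this
  have hk0nn : (0:ℤ) ≤ k 0 := hk.1
  set A1 : ℝ := ∑ m ∈ Finset.Icc (k 0) (S-1), β m with hA1def
  set Ln : ℝ := ∑ j ∈ Finset.Icc (k 0) S, (j:ℝ) * β j with hLndef
  set A1' : ℝ := ∑ m ∈ Finset.Icc (k' 0) (S-1), β' m with hA1'def
  set Ln' : ℝ := ∑ j ∈ Finset.Icc (k' 0) S, (j:ℝ) * β' j with hLn'def
  have hA1pos : 0 < A1 := by
    apply Finset.sum_pos
    · intro j hj
      rw [Finset.mem_Icc] at hj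
      exact beta_pos hlam hmu hk hβ j hj.1 (by omega)
    · exact ⟨k 0, by rw [Finset.mem_Icc]; omega⟩
  have hA1'pos : 0 < A1' := by
    apply Finset.sum_pos
    · intro j hj
      rw [Finset.mem_Icc] at hj
      exact beta_pos hlam hmu hk' hβ' j hj.1 (by omega)
    · exact ⟨k' 0, by rw [Finset.mem_Icc]; omega⟩
  -- extend β' by zero below k' 0
  set b : ℤ → ℝ := fun j => if k' 0 ≤ j then β' j else 0 with hbdef
  set g : ℤ → ℤ → ℝ := fun j m => b j * β m - β j * b m with hgdef
  have hbnn : ∀ j, k 0 ≤ j → j ≤ S → 0 ≤ b j := by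
    intro j h1 h2
    by_cases hc : k' 0 ≤ j
    · simp only [hbdef, if_pos hc]
      exact (beta_pos hlam hmu hk' hβ' j hc h2).le
    · simp only [hbdef, if_neg hc]
      exact le_refl 0
  -- cross positivity
  have hg : ∀ j m : ℤ, k 0 ≤ m → m ≤ j → j ≤ S → 0 ≤ g j m := by
    intro j m h1 h2 h3
    by_cases hc : k' 0 ≤ m
    · have hbj : b j = β' j := by simp only [hbdef]; rw [if_pos (by omega)]
      have hbm : b m = β' m := by simp only [hbdef]; rw [if_pos hc]
      have hjm : m + (((j - m).toNat : ℕ) : ℤ) = j := by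
        rw [Int.toNat_of_nonneg (by omega)]; ring
      have hcr := cross_ineq hlam hmu hk hk' hβ hβ' hle (j - m).toNat m hc
        (by rw [hjm]; exact h3)
      rw [hjm] at hcr
      simp only [hgdef, hbj, hbm]
      nlinarith [hcr]
    · have hbm : b m = 0 := by simp only [hbdef]; rw [if_neg hc]
      have hβm : 0 < β m := beta_pos hlam hmu hk hβ m h1 (by omega)
      simp only [hgdef, hbm]
      have := hbnn j (by omega) h3
      nlinarith
  have hgswap : ∀ j m : ℤ, g m j = - g j m := by
    intro j m; simp only [hgdef]; ring
  -- rewrite primed sums over the larger interval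
  have hLn'eq : Ln' = ∑ j ∈ Finset.Icc (k 0) S, (j:ℝ) * b j := by
    rw [hLn'def]
    calc ∑ j ∈ Finset.Icc (k' 0) S, (j:ℝ) * β' j
        = ∑ j ∈ Finset.Icc (k' 0) S, (j:ℝ) * b j := by
          apply Finset.sum_congr rfl
          intro j hj
          rw [Finset.mem_Icc] at hj
          simp only [hbdef]; rw [if_pos hj.1]
      _ = ∑ j ∈ Finset.Icc (k 0) S, (j:ℝ) * b j := by
          apply Finset.sum_subset (Finset.Icc_subset_Icc_left hk0le)
          intro x hx hnx
          rw [Finset.mem_Icc] at hx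
          rw [Finset.mem_Icc] at hnx
          push_neg at hnx
          simp only [hbdef]
          rw [if_neg (by omega)]
          ring
  have hA1'eq : A1' = ∑ m ∈ Finset.Icc (k 0) (S-1), b m := by
    rw [hA1'def]
    calc ∑ m ∈ Finset.Icc (k' 0) (S-1), β' m
        = ∑ m ∈ Finset.Icc (k' 0) (S-1), b m := by
          apply Finset.sum_congr rfl
          intro m hm
          rw [Finset.mem_Icc] at hm
          simp only [hbdef]; rw [if_pos hm.1]
      _ = ∑ m ∈ Finset.Icc (k 0) (S-1), b m := by
          apply Finset.sum_subset (Finset.Icc_subset_Icc_left hk0le)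
          intro x hx hnx
          rw [Finset.mem_Icc] at hx
          rw [Finset.mem_Icc] at hnx
          push_neg at hnx
          simp only [hbdef]
          rw [if_neg (by omega)]
  -- key rearrangement inequality
  have key : Ln * A1' ≤ Ln' * A1 := by
    rw [hLn'eq, hA1'eq, ← sub_nonneg]
    have hexp : (∑ j ∈ Finset.Icc (k 0) S, (j:ℝ) * b j) * A1
        - Ln * (∑ m ∈ Finset.Icc (k 0) (S-1), b m)
        = ∑ j ∈ Finset.Icc (k 0) S, ∑ m ∈ Finset.Icc (k 0) (S-1), (j:ℝ) * g j m := by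
      rw [hA1def, hLndef, Finset.sum_mul_sum, Finset.sum_mul_sum, ← Finset.sum_sub_distrib]
      apply Finset.sum_congr rfl
      intro j _
      rw [← Finset.sum_sub_distrib]
      apply Finset.sum_congr rfl
      intro m _
      simp only [hgdef]
      ring
    rw [hexp]
    have hdiff : Finset.Icc (k 0) S \ {S} = Finset.Icc (k 0) (S-1) := by
      ext x
      simp only [Finset.mem_sdiff, Finset.mem_Icc, Finset.mem_singleton]
      omega
    rw [Finset.sum_eq_sum_sdiff_singleton_add
      (show S ∈ Finset.Icc (k 0) S by rw [Finset.mem_Icc]; omega), hdiff]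
    have hterm2 : 0 ≤ ∑ m ∈ Finset.Icc (k 0) (S-1), (S:ℝ) * g S m := by
      apply Finset.sum_nonneg
      intro m hm
      rw [Finset.mem_Icc] at hm
      have hS0 : (0:ℝ) ≤ (S:ℝ) := by exact_mod_cast (by omega : (0:ℤ) ≤ S)
      exact mul_nonneg hS0 (hg S m hm.1 (by omega) le_rfl)
    have hterm1 : 0 ≤ ∑ j ∈ Finset.Icc (k 0) (S-1), ∑ m ∈ Finset.Icc (k 0) (S-1), (j:ℝ) * g j m := by
      set D1 : ℝ := ∑ j ∈ Finset.Icc (k 0) (S-1), ∑ m ∈ Finset.Icc (k 0) (S-1), (j:ℝ) * g j m with hD1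
      have hneg : (∑ j ∈ Finset.Icc (k 0) (S-1), ∑ m ∈ Finset.Icc (k 0) (S-1), (m:ℝ) * g j m) = -D1 := by
        rw [Finset.sum_comm, hD1, ← Finset.sum_neg_distrib]
        apply Finset.sum_congr rfl
        intro m _
        rw [← Finset.sum_neg_distrib]
        apply Finset.sum_congr rfl
        intro j _
        rw [hgswap m j]
        ring
      have h2D : 2 * D1 = ∑ j ∈ Finset.Icc (k 0) (S-1), ∑ m ∈ Finset.Icc (k 0) (S-1), ((j:ℝ) - (m:ℝ)) * g j m := by
        have hsplitsum : ∑ j ∈ Finset.Icc (k 0) (S-1), ∑ m ∈ Finset.Icc (k 0) (S-1), ((j:ℝ) - (m:ℝ)) * g j m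
            = (∑ j ∈ Finset.Icc (k 0) (S-1), ∑ m ∈ Finset.Icc (k 0) (S-1), (j:ℝ) * g j m)
            - (∑ j ∈ Finset.Icc (k 0) (S-1), ∑ m ∈ Finset.Icc (k 0) (S-1), (m:ℝ) * g j m) := by
          rw [← Finset.sum_sub_distrib]
          refine Finset.sum_congr rfl fun j _ => ?_
          rw [← Finset.sum_sub_distrib]
          exact Finset.sum_congr rfl fun m _ => by ring
        rw [hsplitsum, hneg, ← hD1]
        ring
      have hnn : 0 ≤ ∑ j ∈ Finset.Icc (k 0) (S-1), ∑ m ∈ Finset.Icc (k 0) (S-1), ((j:ℝ) - (m:ℝ)) * g j m := by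
        apply Finset.sum_nonneg
        intro j hj
        apply Finset.sum_nonneg
        intro m hm
        rw [Finset.mem_Icc] at hj hm
        rcases le_or_gt m j with h | h
        · apply mul_nonneg
          · rw [sub_nonneg]; exact_mod_cast h
          · exact hg j m hm.1 h (by omega)
        · have ha : (j:ℝ) - (m:ℝ) ≤ 0 := by rw [sub_nonpos]; exact_mod_cast h.le
          have h1 := hg m j hj.1 h.le (by omega)
          have h2 := hgswap m j
          nlinarith
      linarith
    linarith
  -- conclude
  have hdiv : Ln / (lam * A1) ≤ Ln' / (lam * A1') := by
    rw [div_le_div_iff₀ (by positivity) (by positivity)]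
    calc Ln * (lam * A1') = lam * (Ln * A1') := by ring
      _ ≤ lam * (Ln' * A1) := mul_le_mul_of_nonneg_left key hlam.le
      _ = Ln' * (lam * A1) := by ring
  have hW1 := Wq_eq hlam hmu hN hk hβ
  have hW2 := Wq_eq hlam hmu hN hk' hβ'
  rw [hW1, hW2] at hWq
  rw [← hLndef, ← hA1def, ← hLn'def, ← hA1'def] at hWq
  linarith


/-- Dominance rule: if the two policies agree with the minimal values
`0, 1, …, J-1` on the first `J` switching points, differ at `J`, and
`W_q(K') < W_q(K)`, then some switching point with index in
`{J, …, N-1}` is strictly smaller in `K'` than in `K`. -/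
theorem dominance_rule
    (lam mu : ℝ) (hlam : 0 < lam) (hmu : 0 < mu)
    (N : ℕ) (hN : 1 ≤ N) (S : ℤ) (hS : (N : ℤ) ≤ S)
    (k k' : ℕ → ℤ) (hk : IsPolicy N S k) (hk' : IsPolicy N S k')
    (J : ℕ) (hJ : J < N)
    (hpre : ∀ m : ℕ, m < J → k m = (m : ℤ) ∧ k' m = (m : ℤ))
    (hne : k J ≠ k' J)
    (β β' : ℤ → ℝ)
    (hβ : IsBeta lam mu N k β) (hβ' : IsBeta lam mu N k' β')
    (hWq : Wq lam mu S k' β' < Wq lam mu S k β) :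
    ∃ i : ℕ, J ≤ i ∧ i < N ∧ k' i < k i := by
  unfold Wq at hWq
  exact dominance_rule' lam mu hlam hmu N hN S hS k k' hk hk' J hJ hpre hne β β' hβ hβ' hWq
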